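/- arXiv:1205.5932 — 2 statements merged into one kernel-verified Lean document; each statement's English description precedes it below -/
import Mathlib

section
/- Let p_1 < p_2 be odd primes. The unitary Cayley graph of Z/(p_1 p_2)Z is Ramanujan if and only if p_2 ≤ 4·p_1 − 5. -/
open Polynomial

open Polynomial

/-- The unitary Cayley graph of a finite commutative ring `R`. -/
def unitaryCayley (R : Type*) [CommRing R] [Fintype R] [DecidableEq R] : SimpleGraph R where
  Adj x y := x ≠ y ∧ IsUnit (x - y)
  symm := ⟨by
    intro x y h
    exact ⟨h.1.symm, by simpa using h.2.neg⟩⟩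
  loopless := ⟨fun x h => h.1 rfl⟩

instance unitaryCayley.instDecidableRel (R : Type*) [CommRing R] [Fintype R] [DecidableEq R] :
    DecidableRel (unitaryCayley R).Adj := fun a b =>
  decidable_of_iff (a ≠ b ∧ ∃ c, (a - b) * c = 1)
    (and_congr Iff.rfl isUnit_iff_exists_inv.symm)

/-- An `r`-regular graph is Ramanujan if every adjacency eigenvalue other than `±r`
has absolute value at most `2 * sqrt (r - 1)`. -/
def IsRamanujan {V : Type*} [Fintype V] [DecidableEq V] (G : SimpleGraph V)
    [DecidableRel G.Adj] (r : ℕ) : Prop :=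
  ∀ μ ∈ (SimpleGraph.adjMatrix ℝ G).charpoly.roots,
    |μ| ≠ (r : ℝ) → |μ| ≤ 2 * Real.sqrt ((r : ℝ) - 1)

/-- The energy of a graph: the sum of absolute values of its adjacency eigenvalues. -/
noncomputable def graphEnergy {V : Type*} [Fintype V] [DecidableEq V] (G : SimpleGraph V)
    [DecidableRel G.Adj] : ℝ :=
  ((SimpleGraph.adjMatrix ℝ G).charpoly.roots.map (fun μ => |μ|)).sum


open Matrix Polynomial Finset


section aux
lemma aux_charpoly_conj {n R : Type*} [Fintype n] [DecidableEq n] [CommRing R]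
    (P D Q : Matrix n n R) (h : P * Q = 1) : (P * D * Q).charpoly = D.charpoly := by
  have hC : ∀ M N : Matrix n n R, (C : R →+* R[X]).mapMatrix (M * N) =
      (C : R →+* R[X]).mapMatrix M * (C : R →+* R[X]).mapMatrix N := fun M N => map_mul _ _ _
  set P' := (C : R →+* R[X]).mapMatrix P with hP'
  set Q' := (C : R →+* R[X]).mapMatrix Q with hQ'
  have h1 : P' * Q' = 1 := by rw [hP', hQ', ← hC, h, _root_.map_one]
  have key : charmatrix (P * D * Q) = P' * charmatrix D * Q' := by
    rw [charmatrix, charmatrix, Matrix.mul_sub, Matrix.sub_mul, hC, hC]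
    congr 1
    have : Matrix.scalar n (X : R[X]) = (X : R[X]) • (1 : Matrix n n R[X]) := by
      rw [smul_eq_diagonal_mul, mul_one]; rfl
    rw [this, Matrix.mul_smul, Matrix.smul_mul, mul_one, h1]
  rw [Matrix.charpoly, Matrix.charpoly, key, det_mul, det_mul]
  have : P'.det * Q'.det = 1 := by rw [← det_mul, h1, det_one]
  calc P'.det * (charmatrix D).det * Q'.det = (charmatrix D).det * (P'.det * Q'.det) := by ring
  _ = (charmatrix D).det := by rw [this, mul_one]

lemma aux_charpoly_diagonal {n R : Type*} [Fintype n] [DecidableEq n] [CommRing R]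
    (d : n → R) : (diagonal d).charpoly = ∏ i, (X - C (d i)) := by
  have : charmatrix (diagonal d) = diagonal (fun i => X - C (d i)) := by
    ext i j
    by_cases h : i = j
    · subst h; simp
    · rw [charmatrix_apply_ne _ _ _ h, diagonal_apply_ne _ h, diagonal_apply_ne _ h, map_zero,
        neg_zero]
  rw [Matrix.charpoly, this, det_diagonal]

variable (p : ℕ)

noncomputable def auxA : Matrix (ZMod p) (ZMod p) ℝ :=
  Matrix.of fun i j => if i ≠ j then (1:ℝ) else 0

noncomputable def auxP : Matrix (ZMod p) (ZMod p) ℝ :=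
  Matrix.of fun i j => if j = 0 then (1:ℝ) else
    (if i = 0 then (1:ℝ) else 0) - (if i = j then (1:ℝ) else 0)

noncomputable def auxQ : Matrix (ZMod p) (ZMod p) ℝ :=
  Matrix.of fun i j => (p:ℝ)⁻¹ - (if i ≠ 0 ∧ i = j then (1:ℝ) else 0)

noncomputable def auxd (i : ZMod p) : ℝ := if i = 0 then (p:ℝ) - 1 else -1

variable [NeZero p]

lemma aux_card_erase : ((Finset.univ.erase (0 : ZMod p)).card : ℝ) = (p:ℝ) - 1 := by
  rw [Finset.card_erase_of_mem (Finset.mem_univ _), Finset.card_univ, ZMod.card]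
  rw [Nat.cast_sub (NeZero.one_le), Nat.cast_one]

lemma aux_rowsum (i : ZMod p) : ∑ k, auxP p i k = if i = 0 then (p:ℝ) else 0 := by
  rw [← Finset.add_sum_erase _ _ (Finset.mem_univ (0 : ZMod p))]
  have h1 : ∑ k ∈ Finset.univ.erase (0 : ZMod p), auxP p i k
      = ∑ k ∈ Finset.univ.erase (0 : ZMod p),
        ((if i = 0 then (1:ℝ) else 0) - (if i = k then (1:ℝ) else 0)) := by
    refine Finset.sum_congr rfl fun k hk => ?_
    have : k ≠ 0 := (Finset.mem_erase.mp hk).1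
    simp [auxP, this]
  rw [h1, Finset.sum_sub_distrib, Finset.sum_const, nsmul_eq_mul]
  have h2 : ∑ k ∈ Finset.univ.erase (0 : ZMod p), (if i = k then (1:ℝ) else 0)
      = if i ≠ 0 then (1:ℝ) else 0 := by
    simp_rw [eq_comm (a := i)]
    rw [Finset.sum_ite_eq' (Finset.univ.erase (0 : ZMod p)) i (fun _ => (1:ℝ))]
    simp [Finset.mem_erase]
  rw [h2, aux_card_erase]
  by_cases hi : i = 0 <;> simp [auxP, hi]

lemma auxPQ : auxP p * auxQ p = 1 := by
  have hp : (p:ℝ) ≠ 0 := Nat.cast_ne_zero.mpr (NeZero.ne p)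
  ext i j
  rw [Matrix.mul_apply]
  have expand : ∀ k, auxP p i k * auxQ p k j
      = auxP p i k * (p:ℝ)⁻¹ - (if k = j then auxP p i k * (if j ≠ 0 then (1:ℝ) else 0) else 0) := by
    intro k
    simp only [auxQ, Matrix.of_apply, mul_sub]
    congr 1
    by_cases hkj : k = j
    · subst hkj
      by_cases hk : k = 0 <;> simp [hk]
    · simp [hkj]
  simp_rw [expand]
  rw [Finset.sum_sub_distrib, ← Finset.sum_mul, aux_rowsum,
    Finset.sum_ite_eq' Finset.univ j (fun k => auxP p i k * (if j ≠ 0 then (1:ℝ) else 0))]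
  simp only [Finset.mem_univ, if_true]
  by_cases hi : i = 0 <;> by_cases hj : j = 0 <;>
    simp [auxP, Matrix.one_apply, hi, hj, hp, eq_comm] <;>
    by_cases hij : i = j <;> simp [hij] <;> field_simp

lemma auxAP : auxA p * auxP p = auxP p * Matrix.diagonal (auxd p) := by
  ext i j
  rw [Matrix.mul_apply, Matrix.mul_diagonal]
  have expand : ∀ k, auxA p i k * auxP p k j = auxP p k j - (if k = i then auxP p k j else 0) := by
    intro k
    by_cases hk : k = i
    · subst hk; simp [auxA]
    · simp [auxA, Ne.symm hk, hk]
  simp_rw [expand]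
  rw [Finset.sum_sub_distrib, Finset.sum_ite_eq' Finset.univ i (fun k => auxP p k j)]
  simp only [Finset.mem_univ, if_true]
  have colsum : ∑ k, auxP p k j = if j = 0 then (p:ℝ) else 0 := by
    by_cases hj : j = 0
    · subst hj; simp [auxP, ZMod.card]
    · simp only [auxP, Matrix.of_apply, hj, if_false]
      rw [Finset.sum_sub_distrib]
      rw [Finset.sum_ite_eq' Finset.univ (0:ZMod p) (fun _ => (1:ℝ)),
        Finset.sum_ite_eq' Finset.univ j (fun _ => (1:ℝ))]
      simp
  rw [colsum]
  by_cases hj : j = 0 <;> by_cases hi : i = 0 <;>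
    simp [auxP, auxd, hj, hi, eq_comm] <;> ring_nf <;>
    (try by_cases hij : i = j) <;> simp_all <;> ring

lemma auxA_eq : auxA p = auxP p * Matrix.diagonal (auxd p) * auxQ p := by
  calc auxA p = auxA p * (auxP p * auxQ p) := by rw [auxPQ, mul_one]
  _ = (auxA p * auxP p) * auxQ p := by rw [mul_assoc]
  _ = auxP p * Matrix.diagonal (auxd p) * auxQ p := by rw [auxAP]

lemma auxA_charpoly : (auxA p).charpoly = ∏ i, (X - C (auxd p i)) := by
  rw [auxA_eq, aux_charpoly_conj _ _ _ (auxPQ p), aux_charpoly_diagonal]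

end aux

lemma auxA_eq_PDQ (p : ℕ) [NeZero p] : ∃ P Q : Matrix (ZMod p) (ZMod p) ℝ,
    P * Q = 1 ∧ auxA p = P * Matrix.diagonal (auxd p) * Q :=
  ⟨auxP p, auxQ p, auxPQ p, auxA_eq p⟩

section main
variable (p₁ p₂ : ℕ) (hp₁ : p₁.Prime) (hp₂ : p₂.Prime)


lemma adj_eq_kron (hne : p₁ ≠ p₂) :
    haveI : NeZero (p₁ * p₂) := ⟨mul_ne_zero hp₁.pos.ne' hp₂.pos.ne'⟩
    SimpleGraph.adjMatrix ℝ (unitaryCayley (ZMod (p₁ * p₂))) =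
      (Matrix.kroneckerMap (· * ·) (auxA p₁) (auxA p₂)).submatrix
        (ZMod.chineseRemainder ((Nat.coprime_primes hp₁ hp₂).mpr hne)).toEquiv
        (ZMod.chineseRemainder ((Nat.coprime_primes hp₁ hp₂).mpr hne)).toEquiv := by
  haveI : NeZero (p₁ * p₂) := ⟨mul_ne_zero hp₁.pos.ne' hp₂.pos.ne'⟩
  haveI := Fact.mk hp₁
  haveI := Fact.mk hp₂
  set e := ZMod.chineseRemainder ((Nat.coprime_primes hp₁ hp₂).mpr hne)
  ext x y
  rw [SimpleGraph.adjMatrix_apply, Matrix.submatrix_apply, Matrix.kroneckerMap_apply]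
  have hunit : IsUnit (x - y) ↔ (e x).1 ≠ (e y).1 ∧ (e x).2 ≠ (e y).2 := by
    have h1 : IsUnit (x - y) ↔ IsUnit (e (x - y)) := by
      constructor
      · exact fun h => h.map (e : ZMod (p₁*p₂) →+* ZMod p₁ × ZMod p₂)
      · intro h
        have := h.map (e.symm : ZMod p₁ × ZMod p₂ →+* ZMod (p₁*p₂))
        simpa using this
    have h2 : ∀ u : ZMod p₁ × ZMod p₂, IsUnit u ↔ IsUnit u.1 ∧ IsUnit u.2 := by
      intro u
      constructor
      · exact fun h => ⟨h.map (RingHom.fst _ _), h.map (RingHom.snd _ _)⟩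
      · rintro ⟨h1u, h2u⟩
        obtain ⟨c, hc⟩ := isUnit_iff_exists_inv.mp h1u
        obtain ⟨d, hd⟩ := isUnit_iff_exists_inv.mp h2u
        refine isUnit_iff_exists_inv.mpr ⟨(c, d), ?_⟩
        obtain ⟨u1, u2⟩ := u
        simp_all [Prod.ext_iff]
    rw [h1, map_sub, h2]
    simp only [Prod.fst_sub, Prod.snd_sub, isUnit_iff_ne_zero, sub_ne_zero]
  have hAdj : (unitaryCayley (ZMod (p₁*p₂))).Adj x y ↔
      ((e x).1 ≠ (e y).1 ∧ (e x).2 ≠ (e y).2) := by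
    constructor
    · intro hh; obtain ⟨hxy, hu⟩ := (show x ≠ y ∧ IsUnit (x - y) from hh); exact hunit.mp hu
    · rintro h; exact (show x ≠ y ∧ IsUnit (x - y) from ⟨fun hh => h.1 (by rw [hh]), hunit.mpr h⟩)
  by_cases h : (e x).1 ≠ (e y).1 ∧ (e x).2 ≠ (e y).2
  · rw [if_pos (hAdj.mpr h)]
    simp [auxA, h.1, h.2]
  · rw [if_neg (fun hh => h (hAdj.mp hh))]
    rw [not_and_or, not_not, not_not] at h
    rcases h with h | h <;> simp [auxA, h]

end main

/-- For odd primes `p₁ < p₂`, the unitary Cayley graph of `ℤ/(p₁p₂)ℤ` is Ramanujan iff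
`p₂ ≤ 4p₁ - 5`. -/
theorem stmt_13 (p₁ p₂ : ℕ) (hp₁ : p₁.Prime) (hp₂ : p₂.Prime)
    (h₁ : p₁ ≠ 2) (h₂ : p₂ ≠ 2) (hlt : p₁ < p₂) :
    haveI : NeZero (p₁ * p₂) := ⟨mul_ne_zero hp₁.pos.ne' hp₂.pos.ne'⟩
    (IsRamanujan (unitaryCayley (ZMod (p₁ * p₂))) ((p₁ * p₂).totient) ↔ p₂ ≤ 4 * p₁ - 5) := by
  haveI : NeZero (p₁ * p₂) := ⟨mul_ne_zero hp₁.pos.ne' hp₂.pos.ne'⟩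
  haveI : NeZero p₁ := ⟨hp₁.pos.ne'⟩
  haveI : NeZero p₂ := ⟨hp₂.pos.ne'⟩
  haveI := Fact.mk hp₁
  haveI := Fact.mk hp₂
  have hne : p₁ ≠ p₂ := hlt.ne
  have hp₁3 : 3 ≤ p₁ := by
    rcases hp₁.two_le.lt_or_eq with h | h
    · omega
    · omega
  obtain ⟨k₂, hk₂⟩ := hp₂.odd_of_ne_two h₂
  have hp₂5 : 5 ≤ p₂ := by omega
  -- the multiset of eigenvalues
  set e := (ZMod.chineseRemainder ((Nat.coprime_primes hp₁ hp₂).mpr hne)).toEquiv with he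
  set f : ZMod p₁ × ZMod p₂ → ℝ := fun ij => auxd p₁ ij.1 * auxd p₂ ij.2 with hf
  have hcp : (SimpleGraph.adjMatrix ℝ (unitaryCayley (ZMod (p₁ * p₂)))).charpoly
      = ∏ ij : ZMod p₁ × ZMod p₂, (X - C (f ij)) := by
    rw [adj_eq_kron p₁ p₂ hp₁ hp₂ hne]
    have hre : (Matrix.kroneckerMap (· * ·) (auxA p₁) (auxA p₂)).submatrix e e
        = Matrix.reindex e.symm e.symm (Matrix.kroneckerMap (· * ·) (auxA p₁) (auxA p₂)) := by
      rw [Matrix.reindex_apply]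
      simp
    rw [hre, Matrix.charpoly_reindex]
    obtain ⟨P₁, Q₁, hPQ₁, hA₁⟩ := auxA_eq_PDQ p₁
    obtain ⟨P₂, Q₂, hPQ₂, hA₂⟩ := auxA_eq_PDQ p₂
    rw [hA₁, hA₂]
    rw [show Matrix.kroneckerMap (· * ·) (P₁ * Matrix.diagonal (auxd p₁) * Q₁)
          (P₂ * Matrix.diagonal (auxd p₂) * Q₂)
        = (Matrix.kroneckerMap (· * ·) P₁ P₂ *
            Matrix.kroneckerMap (· * ·) (Matrix.diagonal (auxd p₁)) (Matrix.diagonal (auxd p₂))) *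
          Matrix.kroneckerMap (· * ·) Q₁ Q₂ from by
      rw [← Matrix.mul_kronecker_mul, ← Matrix.mul_kronecker_mul]]
    have hone : Matrix.kroneckerMap (· * ·) P₁ P₂ * Matrix.kroneckerMap (· * ·) Q₁ Q₂ = 1 := by
      rw [← Matrix.mul_kronecker_mul, hPQ₁, hPQ₂, Matrix.one_kronecker_one]
    rw [aux_charpoly_conj _ _ _ hone, Matrix.diagonal_kronecker_diagonal,
      aux_charpoly_diagonal]
  have hroots : (SimpleGraph.adjMatrix ℝ (unitaryCayley (ZMod (p₁ * p₂)))).charpoly.roots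
      = Multiset.map f Finset.univ.val := by
    rw [hcp]
    have : (∏ ij : ZMod p₁ × ZMod p₂, (X - C (f ij)))
        = (Multiset.map (fun r => X - C r) (Multiset.map f Finset.univ.val)).prod := by
      rw [Multiset.map_map]
      rfl
    rw [this, Polynomial.roots_multiset_prod_X_sub_C]
  -- numeric setup
  set A := p₁ - 1 with hA
  set B := p₂ - 1 with hB
  set a : ℝ := (A : ℝ) with ha
  set b : ℝ := (B : ℝ) with hb
  have ha2 : (2:ℝ) ≤ a := by rw [ha]; exact_mod_cast by omega
  have hb4 : (4:ℝ) ≤ b := by rw [hb]; exact_mod_cast by omega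
  have hab : a < b := by rw [ha, hb]; exact_mod_cast by omega
  have hd₁ : ∀ i : ZMod p₁, auxd p₁ i = a ∨ auxd p₁ i = -1 := by
    intro i
    by_cases h : i = 0
    · left; rw [auxd, if_pos h, ha, hA]; push_cast [Nat.cast_sub hp₁.one_le]; ring
    · right; rw [auxd, if_neg h]
  have hd₂ : ∀ j : ZMod p₂, auxd p₂ j = b ∨ auxd p₂ j = -1 := by
    intro j
    by_cases h : j = 0
    · left; rw [auxd, if_pos h, hb, hB]; push_cast [Nat.cast_sub hp₂.one_le]; ring
    · right; rw [auxd, if_neg h]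
  have hval : ∀ ij : ZMod p₁ × ZMod p₂,
      f ij = a * b ∨ f ij = -a ∨ f ij = -b ∨ f ij = 1 := by
    intro ij
    rcases hd₁ ij.1 with h1 | h1 <;> rcases hd₂ ij.2 with h2 | h2 <;>
      rw [hf] <;> simp only [h1, h2] <;> [exact Or.inl trivial; (right;left); (right;right;left);
        (right;right;right)] <;> ring
  have hr : (((p₁ * p₂).totient : ℝ)) = a * b := by
    rw [Nat.totient_mul ((Nat.coprime_primes hp₁ hp₂).mpr hne), Nat.totient_prime hp₁,
      Nat.totient_prime hp₂, ha, hb, hA, hB]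
    push_cast
    ring
  have hmemb : (-b) ∈ (SimpleGraph.adjMatrix ℝ (unitaryCayley (ZMod (p₁ * p₂)))).charpoly.roots := by
    rw [hroots, Multiset.mem_map]
    refine ⟨(1, 0), by simp, ?_⟩
    have h10 : (1 : ZMod p₁) ≠ 0 := one_ne_zero
    rw [hf]
    simp only [auxd, if_neg h10, if_pos rfl]
    rw [hb, hB]
    push_cast [Nat.cast_sub hp₂.one_le]
    ring
  constructor
  · intro hram
    have habs : |(-b)| = b := by rw [abs_neg, abs_of_nonneg (by linarith)]
    have hneb : |(-b)| ≠ (((p₁ * p₂).totient : ℝ)) := by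
      rw [habs, hr]
      nlinarith
    have hle := hram (-b) hmemb hneb
    rw [habs, hr] at hle
    have hab1 : (0:ℝ) ≤ a * b - 1 := by nlinarith
    have hsq : b ^ 2 ≤ 4 * (a * b - 1) := by
      nlinarith [Real.sq_sqrt hab1, Real.sqrt_nonneg (a * b - 1)]
    have hnat : B * B + 4 ≤ 4 * (A * B) := by
      have : (B:ℝ) * B + 4 ≤ 4 * ((A:ℝ) * B) := by rw [← ha, ← hb]; nlinarith
      exact_mod_cast this
    have hBA : B < 4 * A := by nlinarith
    omega
  · intro hle μ hmem hneq
    rw [hroots, Multiset.mem_map] at hmem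
    obtain ⟨ij, -, hij⟩ := hmem
    have hnat : B * B + 4 ≤ 4 * (A * B) := by
      have h1 : B + 2 ≤ 4 * A := by omega
      have h2 : (B + 2) * B ≤ (4 * A) * B := Nat.mul_le_mul_right B h1
      have h3 : 4 ≤ 2 * B := by omega
      nlinarith
    have hab1 : (0:ℝ) ≤ a * b - 1 := by nlinarith
    have hkey : b ≤ 2 * Real.sqrt (a * b - 1) := by
      have hsq : b ^ 2 ≤ 4 * (a * b - 1) := by
        have : (B:ℝ) * B + 4 ≤ 4 * ((A:ℝ) * B) := by exact_mod_cast hnat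
        rw [← ha, ← hb] at this
        nlinarith
      have h3 : Real.sqrt (4 * (a * b - 1)) = 2 * Real.sqrt (a * b - 1) := by
        rw [show (4 : ℝ) * (a * b - 1) = (2 * Real.sqrt (a*b-1)) ^ 2 from by
          rw [mul_pow, Real.sq_sqrt hab1]; ring]
        rw [Real.sqrt_sq (by positivity)]
      calc b = Real.sqrt (b ^ 2) := (Real.sqrt_sq (by linarith)).symm
      _ ≤ Real.sqrt (4 * (a * b - 1)) := Real.sqrt_le_sqrt hsq
      _ = 2 * Real.sqrt (a * b - 1) := h3
    rw [hr]
    rcases hval ij with h | h | h | h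
    · exfalso
      apply hneq
      rw [← hij, h, hr, abs_of_nonneg (by nlinarith)]
    · rw [← hij, h, abs_neg, abs_of_nonneg (by linarith)]
      linarith
    · rw [← hij, h, abs_neg, abs_of_nonneg (by linarith)]
      exact hkey
    · rw [← hij, h, abs_one]
      linarith
end

section
/- Let R = R_1 × ⋯ × R_s be a product of finite local rings, where R_i has maximal ideal of order m_i. Then for every integer k ≥ 1, the k-th spectral moment of the unitary Cayley graph G_R satisfies s_k(G_R) = |R^×| · Π_{i=1}^{s} (|R_i^×|^{k−1} − (−m_i)^{k−1}). -/
open Polynomial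

open Polynomial

namespace SMAux

/-- indicator of a proposition, with a fixed classical `Decidable` instance -/
noncomputable def ind (p : Prop) : ℝ := @ite ℝ p (Classical.propDecidable p) 1 0

lemma ind_pos {p : Prop} (h : p) : ind p = 1 := if_pos h

lemma ind_neg {p : Prop} (h : ¬ p) : ind p = 0 := if_neg h

lemma ind_congr {p q : Prop} (h : p ↔ q) : ind p = ind q := by
  by_cases hp : p
  · rw [ind_pos hp, ind_pos (h.mp hp)]
  · rw [ind_neg hp, ind_neg (fun hq => hp (h.mpr hq))]

lemma ind_eq_ite (p : Prop) [Decidable p] : ind p = if p then 1 else 0 := by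
  by_cases h : p
  · rw [ind_pos h, if_pos h]
  · rw [ind_neg h, if_neg h]

lemma ind_and_split (p q : Prop) : ind (p ∧ q) = ind p - ind (p ∧ ¬ q) := by
  by_cases hp : p <;> by_cases hq : q
  · rw [ind_pos ⟨hp, hq⟩, ind_pos hp, ind_neg (fun h => h.2 hq)]; ring
  · rw [ind_neg (fun h => hq h.2), ind_pos hp, ind_pos ⟨hp, hq⟩]; ring
  · rw [ind_neg (fun h => hp h.1), ind_neg hp, ind_neg (fun h => hp h.1)]; ring
  · rw [ind_neg (fun h => hp h.1), ind_neg hp, ind_neg (fun h => hp h.1)]; ring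

lemma ind_prod {α : Type*} [Fintype α] (p : α → Prop) :
    ind (∀ i, p i) = ∏ i, ind (p i) := by
  by_cases h : ∀ i, p i
  · rw [ind_pos h, eq_comm]
    exact Finset.prod_eq_one fun i _ => ind_pos (h i)
  · obtain ⟨i, hi⟩ := not_forall.mp h
    rw [ind_neg h, eq_comm]
    exact Finset.prod_eq_zero (Finset.mem_univ i) (ind_neg hi)

lemma sum_ind_pinned {α : Type*} [Fintype α] (a : α) (p : α → Prop) :
    ∑ x : α, ind (x = a ∧ p x) = ind (p a) := by
  classical
  rw [Finset.sum_eq_single a]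
  · exact ind_congr (by simp)
  · exact fun b _ hb => ind_neg (fun h => hb h.1)
  · exact fun h => absurd (Finset.mem_univ a) h

lemma sum_ind_card {α : Type*} [Fintype α] (p : α → Prop) :
    ∑ x : α, ind (p x) = Nat.card {x : α // p x} := by
  classical
  rw [Nat.card_eq_fintype_card, Fintype.card_subtype, ← Finset.sum_boole]
  exact Finset.sum_congr rfl fun x _ => ind_eq_ite _

section Defs

variable (R : Type*) [CommRing R] [Fintype R]

/-- number of `k`-tuples of units summing to `c`, as a real number -/
noncomputable def Wc (k : ℕ) (c : R) : ℝ :=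
  ∑ f : Fin k → R, ind ((∀ j, IsUnit (f j)) ∧ ∑ j, f j = c)

/-- number of `k`-tuples of units with unit sum, as a real number -/
noncomputable def Wu (k : ℕ) : ℝ :=
  ∑ f : Fin k → R, ind ((∀ j, IsUnit (f j)) ∧ IsUnit (∑ j, f j))

/-- number of units, as a real number -/
noncomputable def Uc : ℝ := ∑ x : R, ind (IsUnit x)

/-- number of nonunits, as a real number -/
noncomputable def Mc : ℝ := ∑ x : R, ind (¬ IsUnit x)

end Defs

section Basic

variable {R : Type*} [CommRing R] [Fintype R]

lemma Uc_add_Mc : Uc R + Mc R = Fintype.card R := by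
  rw [Uc, Mc, ← Finset.sum_add_distrib]
  have h : ∀ x : R, ind (IsUnit x) + ind (¬ IsUnit x) = 1 := by
    intro x
    by_cases hx : IsUnit x
    · rw [ind_pos hx, ind_neg (not_not_intro hx)]; ring
    · rw [ind_neg hx, ind_pos hx]; ring
  rw [Finset.sum_congr rfl fun x _ => h x, Finset.sum_const, Finset.card_univ]
  simp

lemma card_units_eq_Uc : (Nat.card Rˣ : ℝ) = Uc R := by
  have e : Rˣ ≃ {x : R // IsUnit x} :=
    ⟨fun u => ⟨u, u.isUnit⟩, fun x => x.2.unit, fun u => Units.ext (by simp),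
      fun x => Subtype.ext x.2.unit_spec⟩
  rw [Nat.card_congr e, Uc, sum_ind_card]

/-- splitting off the first coordinate of a tuple sum -/
lemma sum_split_cons (k : ℕ) (F : R → (Fin k → R) → ℝ) :
    (∑ f : Fin (k+1) → R, F (f 0) (fun j => f j.succ))
      = ∑ u : R, ∑ g : Fin k → R, F u g := by
  rw [← Equiv.sum_comp (Fin.consEquiv fun _ : Fin (k+1) => R)
      (fun f : Fin (k+1) → R => F (f 0) (fun j => f j.succ)), Fintype.sum_prod_type]
  rfl

lemma Wc_zero (c : R) : Wc R 0 c = ind (0 = c) := by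
  rw [Wc, Fintype.sum_unique]
  exact ind_congr (by simp)

lemma Wc_succ (k : ℕ) (c : R) :
    Wc R (k+1) c = ∑ u : R, ind (IsUnit u) * Wc R k (c - u) := by
  rw [Wc]
  have h : ∀ f : Fin (k+1) → R,
      ind ((∀ j, IsUnit (f j)) ∧ ∑ j, f j = c)
      = ind ((IsUnit (f 0) ∧ ∀ j : Fin k, IsUnit (f j.succ)) ∧
          f 0 + ∑ j : Fin k, f j.succ = c) := by
    intro f
    refine ind_congr (and_congr ?_ ?_)
    · exact Fin.forall_fin_succ
    · rw [Fin.sum_univ_succ]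
  rw [Finset.sum_congr rfl fun f _ => h f,
    sum_split_cons k (fun u g => ind ((IsUnit u ∧ ∀ j, IsUnit (g j)) ∧ u + ∑ j, g j = c))]
  refine Finset.sum_congr rfl fun u _ => ?_
  by_cases hu : IsUnit u
  · rw [ind_pos hu, one_mul, Wc]
    refine Finset.sum_congr rfl fun g _ => ind_congr (and_congr ?_ ?_)
    · simp [hu]
    · rw [eq_sub_iff_add_eq']
  · rw [ind_neg hu, zero_mul]
    refine Finset.sum_eq_zero fun g _ => ind_neg (fun hc => hu hc.1.1)

lemma sum_allUnits (k : ℕ) :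
    (∑ f : Fin k → R, ind (∀ j, IsUnit (f j))) = Uc R ^ k := by
  rw [Finset.sum_congr rfl fun f (_ : f ∈ Finset.univ) => ind_prod fun j => IsUnit (f j)]
  classical
  rw [← Fintype.piFinset_univ,
    Finset.sum_prod_piFinset Finset.univ (fun (_ : Fin k) (x : R) => ind (IsUnit x))]
  rw [Finset.prod_const, Finset.card_univ, Fintype.card_fin]
  rfl

end Basic

section Local

variable {R : Type*} [CommRing R] [Fintype R] [IsLocalRing R]

lemma unit_add_nonunit {a b : R} (ha : IsUnit a) (hb : ¬ IsUnit b) : IsUnit (a + b) := by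
  by_contra h
  have h1 : a + b ∈ IsLocalRing.maximalIdeal R := by
    rw [IsLocalRing.mem_maximalIdeal]; exact h
  have h2 : b ∈ IsLocalRing.maximalIdeal R := by
    rw [IsLocalRing.mem_maximalIdeal]; exact hb
  have h3 : a ∈ IsLocalRing.maximalIdeal R := by simpa using Ideal.sub_mem _ h1 h2
  exact mem_nonunits_iff.mp ((IsLocalRing.mem_maximalIdeal a).mp h3) ha

lemma Mc_eq_card_maximalIdeal (M : Ideal R) (hM : M.IsMaximal) :
    (Nat.card M : ℝ) = Mc R := by
  have hMe : M = IsLocalRing.maximalIdeal R := IsLocalRing.eq_maximalIdeal hM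
  have e : M ≃ {x : R // ¬ IsUnit x} := by
    refine Equiv.subtypeEquivRight fun x => ?_
    rw [hMe, IsLocalRing.mem_maximalIdeal, mem_nonunits_iff]
  rw [Nat.card_congr e, Mc, sum_ind_card]

lemma Wu_zero : Wu R 0 = 0 := by
  rw [Wu, Fintype.sum_unique]
  refine ind_neg fun h => ?_
  have := h.2
  rw [Fin.sum_univ_zero] at this
  exact not_isUnit_zero this

lemma Wu_succ (k : ℕ) : Wu R (k + 1) = Uc R ^ (k + 1) - Mc R * Wu R k := by
  rw [Wu]
  have h : ∀ f : Fin (k+1) → R,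
      ind ((∀ j, IsUnit (f j)) ∧ IsUnit (∑ j, f j))
      = ind ((IsUnit (f 0) ∧ ∀ j : Fin k, IsUnit (f j.succ)) ∧
          IsUnit (f 0 + ∑ j : Fin k, f j.succ)) := by
    intro f
    refine ind_congr (and_congr Fin.forall_fin_succ ?_)
    rw [Fin.sum_univ_succ]
  rw [Finset.sum_congr rfl fun f _ => h f,
    sum_split_cons k (fun u g =>
      ind ((IsUnit u ∧ ∀ j, IsUnit (g j)) ∧ IsUnit (u + ∑ j, g j)))]
  have split : ∀ u : R, ∀ g : Fin k → R,
      ind ((IsUnit u ∧ ∀ j, IsUnit (g j)) ∧ IsUnit (u + ∑ j, g j))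
      = ind (IsUnit u) * ind (∀ j, IsUnit (g j))
        - ind ((IsUnit u ∧ ∀ j, IsUnit (g j)) ∧ ¬ IsUnit (u + ∑ j, g j)) := by
    intro u g
    rw [ind_and_split]
    congr 1
    by_cases hu : IsUnit u <;> by_cases hg : ∀ j, IsUnit (g j)
    · rw [ind_pos ⟨hu, hg⟩, ind_pos hu, ind_pos hg]; ring
    · rw [ind_neg (fun h' => hg h'.2), ind_pos hu, ind_neg hg]; ring
    · rw [ind_neg (fun h' => hu h'.1), ind_neg hu]; ring
    · rw [ind_neg (fun h' => hu h'.1), ind_neg hu]; ring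
  rw [Finset.sum_congr rfl fun u _ => Finset.sum_congr rfl fun g _ => split u g]
  rw [Finset.sum_congr rfl fun (u : R) _ => Finset.sum_sub_distrib
    (f := fun g : Fin k → R => ind (IsUnit u) * ind (∀ j, IsUnit (g j)))
    (g := fun g : Fin k → R =>
      ind ((IsUnit u ∧ ∀ j, IsUnit (g j)) ∧ ¬ IsUnit (u + ∑ j, g j))),
    Finset.sum_sub_distrib]
  congr 1
  · -- total count
    have h1 : ∀ u : R, (∑ g : Fin k → R, ind (IsUnit u) * ind (∀ j, IsUnit (g j)))
        = ind (IsUnit u) * Uc R ^ k := by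
      intro u
      rw [← Finset.mul_sum, sum_allUnits]
    rw [Finset.sum_congr rfl fun u _ => h1 u, ← Finset.sum_mul, pow_succ']
    rfl
  · -- bad count
    have inner : ∀ g : Fin k → R,
        (∑ u : R, ind ((IsUnit u ∧ ∀ j, IsUnit (g j)) ∧ ¬ IsUnit (u + ∑ j, g j)))
        = ind ((∀ j, IsUnit (g j)) ∧ IsUnit (∑ j, g j)) * Mc R := by
      intro g
      by_cases hA : ∀ j, IsUnit (g j)
      · by_cases hs : IsUnit (∑ j, g j)
        · have hcond : ∀ u : R, ((IsUnit u ∧ ∀ j, IsUnit (g j)) ∧ ¬ IsUnit (u + ∑ j, g j))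
              ↔ ¬ IsUnit (u + ∑ j, g j) := by
            intro u
            constructor
            · exact fun h' => h'.2
            · intro h'
              refine ⟨⟨?_, hA⟩, h'⟩
              by_contra hu
              exact h' (by simpa [add_comm] using unit_add_nonunit hs hu)
          have hMcEq : (∑ u : R, ind (¬ IsUnit (u + ∑ j, g j))) = Mc R := by
            rw [Mc]
            exact Fintype.sum_equiv (Equiv.addRight (∑ j, g j)) _ _ (fun u => rfl)
          rw [Finset.sum_congr rfl fun u _ => ind_congr (hcond u), hMcEq,
            ind_pos ⟨hA, hs⟩, one_mul]
        · have hcond : ∀ u : R,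
              ¬ ((IsUnit u ∧ ∀ j, IsUnit (g j)) ∧ ¬ IsUnit (u + ∑ j, g j)) := by
            intro u h'
            exact h'.2 (unit_add_nonunit h'.1.1 hs)
          rw [Finset.sum_congr rfl fun u _ => ind_neg (hcond u),
            ind_neg (fun h' => hs h'.2), Finset.sum_const, zero_mul]
          simp
      · rw [Finset.sum_congr rfl fun u _ => ind_neg (fun h' => hA h'.1.2),
          ind_neg (fun h' => hA h'.1), Finset.sum_const, zero_mul]
        simp
    rw [Finset.sum_comm, Finset.sum_congr rfl fun g _ => inner g, ← Finset.sum_mul,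
      mul_comm]
    rfl

lemma Wu_formula (k : ℕ) : (Uc R + Mc R) * Wu R k = Uc R * (Uc R ^ k - (-Mc R) ^ k) := by
  induction k with
  | zero => simp [Wu_zero]
  | succ k ih =>
    rw [Wu_succ]
    linear_combination (-(Mc R)) * ih

lemma Wc_succ_zero (k : ℕ) : Wc R (k + 1) 0 = Wu R k := by
  rw [Wc]
  have h : ∀ f : Fin (k+1) → R,
      ind ((∀ j, IsUnit (f j)) ∧ ∑ j, f j = 0)
      = ind ((IsUnit (f 0) ∧ ∀ j : Fin k, IsUnit (f j.succ)) ∧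
          f 0 + ∑ j : Fin k, f j.succ = 0) := by
    intro f
    refine ind_congr (and_congr Fin.forall_fin_succ ?_)
    rw [Fin.sum_univ_succ]
  rw [Finset.sum_congr rfl fun f _ => h f,
    sum_split_cons k (fun u g =>
      ind ((IsUnit u ∧ ∀ j, IsUnit (g j)) ∧ u + ∑ j, g j = 0)), Finset.sum_comm, Wu]
  refine Finset.sum_congr rfl fun g _ => ?_
  have hcond : ∀ u : R, ((IsUnit u ∧ ∀ j, IsUnit (g j)) ∧ u + ∑ j, g j = 0)
      ↔ (u = -∑ j, g j ∧ ((∀ j, IsUnit (g j)) ∧ IsUnit (∑ j, g j))) := by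
    intro u
    constructor
    · rintro ⟨⟨hu, hg⟩, he⟩
      have hu' : u = -∑ j, g j := eq_neg_of_add_eq_zero_left he
      refine ⟨hu', hg, ?_⟩
      rw [hu'] at hu
      exact (IsUnit.neg_iff _).mp hu
    · rintro ⟨rfl, hg, hs⟩
      exact ⟨⟨(IsUnit.neg_iff _).mpr hs, hg⟩, by ring⟩
  rw [Finset.sum_congr rfl fun u _ => ind_congr (hcond u),
    sum_ind_pinned (-∑ j, g j) (fun _ => (∀ j, IsUnit (g j)) ∧ IsUnit (∑ j, g j))]

end Local

section Pi

lemma pi_isUnit_iff {ι : Type*} {S : ι → Type*} [∀ i, Monoid (S i)] (f : ∀ i, S i) :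
    IsUnit f ↔ ∀ i, IsUnit (f i) := by
  constructor
  · rintro ⟨u, rfl⟩ i
    exact ⟨⟨u.val i, u.inv i, congrFun u.val_inv i, congrFun u.inv_val i⟩, rfl⟩
  · intro h
    choose g hg using fun i => isUnit_iff_exists.mp (h i)
    exact isUnit_iff_exists.mpr
      ⟨g, funext fun i => (hg i).1, funext fun i => (hg i).2⟩

variable {ι : Type*} [Fintype ι] [DecidableEq ι] (S : ι → Type*)
  [∀ i, CommRing (S i)] [∀ i, Fintype (S i)]

lemma Wc_pi (k : ℕ) : Wc (∀ i, S i) k 0 = ∏ i, Wc (S i) k 0 := by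
  set e := (Equiv.piComm fun (_ : Fin k) (i : ι) => S i).symm
  have key : ∀ g : ∀ i, Fin k → S i,
      (∏ i, ind ((∀ j, IsUnit (g i j)) ∧ ∑ j, g i j = 0))
      = ind ((∀ j, IsUnit (e g j)) ∧ ∑ j, e g j = 0) := by
    intro g
    have hg : ∀ j, e g j = fun i => g i j := fun j => rfl
    have hP : ((∀ j, IsUnit (e g j)) ∧ ∑ j, e g j = 0)
        ↔ ∀ i, ((∀ j, IsUnit (g i j)) ∧ ∑ j, g i j = 0) := by
      constructor
      · rintro ⟨h1, h2⟩ i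
        constructor
        · intro j
          have h1j := h1 j
          rw [hg j] at h1j
          exact (pi_isUnit_iff _).mp h1j i
        · have h3 := congrFun h2 i
          rw [Finset.sum_apply] at h3
          exact h3
      · intro h
        refine ⟨fun j => ?_, ?_⟩
        · rw [hg j]
          exact (pi_isUnit_iff _).mpr fun i => (h i).1 j
        · funext i
          rw [Finset.sum_apply]
          exact (h i).2
    rw [← ind_prod]
    exact ind_congr hP.symm
  calc Wc (∀ i, S i) k 0
      = ∑ g : ∀ i, Fin k → S i,
          ∏ i, ind ((∀ j, IsUnit (g i j)) ∧ ∑ j, g i j = 0) := by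
        rw [Wc]
        exact (Fintype.sum_equiv e _ _ key).symm
    _ = ∏ i, ∑ h : Fin k → S i, ind ((∀ j, IsUnit (h j)) ∧ ∑ j, h j = 0) := by
        rw [show (Finset.univ : Finset (∀ i, Fin k → S i))
            = Fintype.piFinset (fun i : ι => (Finset.univ : Finset (Fin k → S i))) from (Fintype.piFinset_univ).symm]
        exact (Finset.prod_univ_sum (fun i : ι => (Finset.univ : Finset (Fin k → S i)))
          (fun i h => ind ((∀ j, IsUnit (h j)) ∧ ∑ j, h j = 0))).symm
    _ = ∏ i, Wc (S i) k 0 := Finset.prod_congr rfl fun i _ => rfl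

lemma card_units_pi : (Nat.card (∀ i, S i)ˣ : ℝ) = ∏ i, Uc (S i) := by
  have key : ∀ x : ∀ i, S i, ind (IsUnit x) = ∏ i, ind (IsUnit (x i)) := by
    intro x
    rw [ind_congr (pi_isUnit_iff x), ind_prod]
  calc (Nat.card (∀ i, S i)ˣ : ℝ)
      = ∑ x : ∀ i, S i, ind (IsUnit x) := by rw [card_units_eq_Uc, Uc]
    _ = ∑ x : ∀ i, S i, ∏ i, ind (IsUnit (x i)) :=
        Finset.sum_congr rfl fun x _ => key x
    _ = ∏ i, ∑ y : S i, ind (IsUnit y) := by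
        rw [show (Finset.univ : Finset (∀ i, S i))
            = Fintype.piFinset (fun i : ι => (Finset.univ : Finset (S i))) from (Fintype.piFinset_univ).symm]
        exact (Finset.prod_univ_sum (fun i : ι => (Finset.univ : Finset (S i)))
          (fun i y => ind (IsUnit y))).symm
    _ = ∏ i, Uc (S i) := Finset.prod_congr rfl fun i _ => rfl

end Pi

section Adjacency

variable {R : Type*} [CommRing R] [Fintype R] [DecidableEq R] [Nontrivial R]

lemma adjMatrix_pow_apply (k : ℕ) (y : R) :
    ∀ x : R, ((SimpleGraph.adjMatrix ℝ (unitaryCayley R)) ^ k) x y = Wc R k (y - x) := by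
  induction k with
  | zero =>
    intro x
    rw [pow_zero, Matrix.one_apply, Wc_zero]
    by_cases h : x = y
    · rw [if_pos h, ind_pos (by rw [h, sub_self])]
    · rw [if_neg h, ind_neg (fun h0 => h (sub_eq_zero.mp h0.symm).symm)]
  | succ k ih =>
    intro x
    rw [pow_succ', Matrix.mul_apply]
    have hterm : ∀ z : R, (SimpleGraph.adjMatrix ℝ (unitaryCayley R)) x z
        * ((SimpleGraph.adjMatrix ℝ (unitaryCayley R)) ^ k) z y
        = ind (IsUnit (z - x)) * Wc R k (y - z) := by
      intro z
      rw [SimpleGraph.adjMatrix_apply, ih z]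
      congr 1
      by_cases hz : IsUnit (z - x)
      · rw [ind_pos hz, if_pos ?_]
        show x ≠ z ∧ IsUnit (x - z)
        constructor
        · intro e
          rw [e, sub_self] at hz
          exact not_isUnit_zero hz
        · have := hz.neg
          rwa [neg_sub] at this
      · rw [ind_neg hz, if_neg ?_]
        intro hadj
        have := (show x ≠ z ∧ IsUnit (x - z) from hadj).2.neg
        rw [neg_sub] at this
        exact hz this
    rw [Finset.sum_congr rfl fun z _ => hterm z, Wc_succ]
    refine Fintype.sum_equiv (Equiv.subRight x) _ _ (fun z => ?_)
    have hc : (Equiv.subRight x) z = z - x := rfl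
    rw [hc, show y - x - (z - x) = y - z from by ring]

lemma trace_pow (k : ℕ) :
    Matrix.trace ((SimpleGraph.adjMatrix ℝ (unitaryCayley R)) ^ k)
      = (Fintype.card R : ℝ) * Wc R k 0 := by
  rw [Matrix.trace]
  have h : ∀ x : R, Matrix.diag ((SimpleGraph.adjMatrix ℝ (unitaryCayley R)) ^ k) x
      = Wc R k 0 := by
    intro x
    rw [Matrix.diag_apply, adjMatrix_pow_apply k x x, sub_self]
  rw [Finset.sum_congr rfl fun x _ => h x, Finset.sum_const, Finset.card_univ,
    nsmul_eq_mul]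

end Adjacency

end SMAux

/-- Let `R = R₁ × ⋯ × R_s` be a product of finite local rings, where `Rᵢ` has maximal
ideal of order `mᵢ`. Then for every `k ≥ 1`, the `k`-th spectral moment (trace of the
`k`-th power of the adjacency matrix) of `G_R` is
`|R^×| · Π_i (|Rᵢ^×|^(k-1) - (-mᵢ)^(k-1))`. -/
theorem stmt_18 (s : ℕ) (hs : 0 < s) (R : Fin s → Type*) [∀ i, CommRing (R i)]
    [∀ i, IsLocalRing (R i)] [∀ i, Fintype (R i)] [∀ i, DecidableEq (R i)]
    (M : ∀ i, Ideal (R i)) (hM : ∀ i, (M i).IsMaximal)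
    (m : Fin s → ℕ) (hm : ∀ i, m i = Nat.card (M i)) (k : ℕ) (hk : 1 ≤ k) :
    Matrix.trace ((SimpleGraph.adjMatrix ℝ (unitaryCayley (∀ i, R i))) ^ k) =
      (Nat.card (∀ i, R i)ˣ : ℝ) *
        ∏ i, ((Nat.card (R i)ˣ : ℝ) ^ (k - 1) - (-(m i : ℝ)) ^ (k - 1)) := by
  classical
  haveI : Nontrivial (∀ i, R i) := ⟨⟨0, 1, fun h => zero_ne_one (congrFun h ⟨0, hs⟩)⟩⟩
  obtain ⟨t, rfl⟩ : ∃ t, k = t + 1 := ⟨k - 1, (Nat.succ_pred_eq_of_pos hk).symm⟩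
  rw [SMAux.trace_pow, SMAux.Wc_pi, SMAux.card_units_pi, Fintype.card_pi]
  rw [Nat.cast_prod, ← Finset.prod_mul_distrib, ← Finset.prod_mul_distrib]
  refine Finset.prod_congr rfl fun i _ => ?_
  have h2 : (m i : ℝ) = SMAux.Mc (R i) := by
    rw [hm i]
    exact SMAux.Mc_eq_card_maximalIdeal (M i) (hM i)
  have ht : t + 1 - 1 = t := rfl
  rw [ht, SMAux.Wc_succ_zero, h2, SMAux.card_units_eq_Uc,
    show ((Fintype.card (R i) : ℕ) : ℝ) = SMAux.Uc (R i) + SMAux.Mc (R i) from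
      SMAux.Uc_add_Mc.symm]
  exact SMAux.Wu_formula t
end
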